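/- arXiv:1910.02389 — 3 statements merged into one kernel-verified Lean document; each statement's English description precedes it below -/
import Mathlib

section
/- Let s_1, s_2, …, s_{C(n,2)} be an enumeration of all transpositions in S_n, each occurring exactly once, in an arbitrary fixed order. Then every permutation π ∈ S_n can be written as the product of some subsequence of (s_1, …, s_{C(n,2)}) taken in order: there exist ε_1, …, ε_{C(n,2)} ∈ {0,1} with π = s_1^{ε_1} · s_2^{ε_2} ⋯ s_{C(n,2)}^{ε_{C(n,2)}}. -/
open Equiv Equiv.Perm

section Aux

variable {G : Type*} [Monoid G]

private lemma prod_ofFn_one (M : ℕ) : (List.ofFn fun _ : Fin M => (1 : G)).prod = 1 := by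
  rw [List.ofFn_const]
  exact List.prod_replicate M 1 |>.trans (one_pow M)

private lemma prod_ofFn_eq_mul_last :
    ∀ {M : ℕ} (g : Fin M → G) (e : Fin M), (∀ k, e < k → g k = 1) →
      (List.ofFn g).prod = (List.ofFn fun k => if k = e then 1 else g k).prod * g e := by
  intro M
  induction M with
  | zero => exact fun g e => e.elim0
  | succ M IH =>
    intro g e hg
    rw [List.ofFn_succ', List.ofFn_succ', List.prod_concat, List.prod_concat]
    rcases eq_or_ne e (Fin.last M) with rfl | hne
    · have h1 : (fun i : Fin M => if (Fin.castSucc i) = Fin.last M then (1:G)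
          else g (Fin.castSucc i)) = fun i : Fin M => g (Fin.castSucc i) := by
        funext i; rw [if_neg (Fin.castSucc_lt_last i).ne]
      rw [h1, if_pos rfl, mul_one]
    · obtain ⟨e0, rfl⟩ := Fin.exists_castSucc_eq.mpr hne
      have hglast : g (Fin.last M) = 1 := hg _ (Fin.castSucc_lt_last e0)
      have h2 : (fun i : Fin M => if (Fin.castSucc i) = Fin.castSucc e0 then (1:G)
          else g (Fin.castSucc i))
          = fun i : Fin M => if i = e0 then (1:G) else g (Fin.castSucc i) := by
        funext i
        by_cases h : i = e0
        · subst h; rw [if_pos rfl, if_pos rfl]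
        · rw [if_neg (by simpa using h), if_neg h]
      have h3 := IH (fun i => g (Fin.castSucc i)) e0
        (fun k hk => hg _ (by exact Fin.castSucc_lt_castSucc_iff.mpr hk))
      rw [h2, if_neg (Fin.castSucc_lt_last e0).ne', hglast, mul_one, mul_one]
      exact h3

end Aux

section PermAux

variable {α : Type*} [Fintype α] [DecidableEq α]

private lemma stepA {π : Perm α} {x y : α} (hsc : π.SameCycle x y) (u : α) :
    π.SameCycle u ((π * Equiv.swap x y) u) := by
  rcases eq_or_ne u x with rfl | hux
  · have h : (π * Equiv.swap u y) u = π y := by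
      rw [Equiv.Perm.mul_apply, Equiv.swap_apply_left]
    rw [h]
    exact hsc.trans (Equiv.Perm.SameCycle.refl π y).apply_right
  · rcases eq_or_ne u y with rfl | huy
    · have h : (π * Equiv.swap x u) u = π x := by
        rw [Equiv.Perm.mul_apply, Equiv.swap_apply_right]
      rw [h]
      exact hsc.symm.trans (Equiv.Perm.SameCycle.refl π x).apply_right
    · have h : (π * Equiv.swap x y) u = π u := by
        rw [Equiv.Perm.mul_apply, Equiv.swap_apply_of_ne_of_ne hux huy]
      rw [h]
      exact (Equiv.Perm.SameCycle.refl π u).apply_right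

private lemma stepA_pow {π : Perm α} {x y : α} (hsc : π.SameCycle x y) :
    ∀ (k : ℕ) (u : α), π.SameCycle u (((π * Equiv.swap x y) ^ k) u) := by
  intro k
  induction k with
  | zero => intro u; simpa using Equiv.Perm.SameCycle.refl π u
  | succ k IH =>
    intro u
    rw [pow_succ, Equiv.Perm.mul_apply]
    exact (stepA hsc u).trans (IH _)

/-- (A): multiplying by a same-cycle swap refines the cycle partition. -/
private lemma sameCycle_of_mul_swap {π : Perm α} {x y u v : α} (hsc : π.SameCycle x y)
    (h : (π * Equiv.swap x y).SameCycle u v) : π.SameCycle u v := by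
  obtain ⟨k, -, hk⟩ := h.exists_pow_eq'
  rw [← hk]
  exact stepA_pow hsc k u

/-- (B): after multiplying by the swap, `x` and `y` are in different cycles. -/
private lemma not_sameCycle_mul_swap {π : Perm α} {x y : α} (hxy : x ≠ y)
    (hsc : π.SameCycle x y) : ¬ (π * Equiv.swap x y).SameCycle x y := by
  intro hcon
  have hNex : ∃ N, 0 < N ∧ (π ^ N) x = x :=
    ⟨orderOf π, orderOf_pos π, by rw [pow_orderOf_eq_one]; rfl⟩
  have hNspec := Nat.find_spec hNex
  set N := Nat.find hNex with hNdef
  have hmex : ∃ m, (π ^ m) x = y := by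
    obtain ⟨i, -, hi⟩ := hsc.exists_pow_eq'
    exact ⟨i, hi⟩
  have hm : (π ^ Nat.find hmex) x = y := Nat.find_spec hmex
  set m := Nat.find hmex with hmdef
  have hm1 : 0 < m := by
    rcases Nat.eq_zero_or_pos m with h | h
    · exact absurd (by rw [← hm, h, pow_zero]; rfl) hxy
    · exact h
  have hmN : m < N := by
    by_contra hcon2
    push_neg at hcon2
    have key : (π ^ (m - N)) x = y := by
      have h2 : π ^ m = π ^ (m - N) * π ^ N := by
        rw [← pow_add, Nat.sub_add_cancel hcon2]
      rw [h2, Equiv.Perm.mul_apply, hNspec.2] at hm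
      exact hm
    exact Nat.find_min hmex (Nat.sub_lt (lt_of_lt_of_le hNspec.1 hcon2) hNspec.1) key
  set Y : Finset α := (Finset.range m).image (fun k => (π ^ (k + 1)) x) with hYdef
  have hxY : x ∉ Y := by
    intro hx
    obtain ⟨k, hk, hkx⟩ := Finset.mem_image.mp hx
    rw [Finset.mem_range] at hk
    exact Nat.find_min hNex (show k + 1 < N by omega) ⟨k.succ_pos, hkx⟩
  have hyY : y ∈ Y := Finset.mem_image.mpr
    ⟨m - 1, Finset.mem_range.mpr (by omega), by rw [Nat.sub_add_cancel hm1]; exact hm⟩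
  set f := π * Equiv.swap x y with hfdef
  have hstep : ∀ z ∈ Y, f z ∈ Y := by
    intro z hz
    obtain ⟨j, hj, hjz⟩ := Finset.mem_image.mp hz
    rw [Finset.mem_range] at hj
    rcases eq_or_ne z y with rfl | hzy
    · have h : f z = π x := by
        rw [hfdef, Equiv.Perm.mul_apply, Equiv.swap_apply_right]
      rw [h]
      exact Finset.mem_image.mpr ⟨0, Finset.mem_range.mpr hm1, by rw [pow_one]⟩
    · have hzx : z ≠ x := by rintro rfl; exact hxY hz
      have h : f z = π z := by
        rw [hfdef, Equiv.Perm.mul_apply, Equiv.swap_apply_of_ne_of_ne hzx hzy]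
      have hjm : j + 1 < m := by
        rcases Nat.lt_or_ge (j + 1) m with h' | h'
        · exact h'
        · exfalso
          have : j + 1 = m := by omega
          exact hzy (by rw [← hjz, this, hm])
      rw [h, ← hjz, ← Equiv.Perm.mul_apply, ← pow_succ']
      exact Finset.mem_image.mpr ⟨j + 1, Finset.mem_range.mpr hjm, rfl⟩
  have himg : Y.image f = Y := by
    apply Finset.eq_of_subset_of_card_le
    · intro w hw
      obtain ⟨z, hz, rfl⟩ := Finset.mem_image.mp hw
      exact hstep z hz
    · rw [Finset.card_image_of_injective _ f.injective]
  have hiff : ∀ z, f z ∈ Y ↔ z ∈ Y := by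
    intro z
    constructor
    · intro h
      have h2 : f z ∈ Y.image f := by rw [himg]; exact h
      obtain ⟨w, hw, hwz⟩ := Finset.mem_image.mp h2
      rwa [← f.injective hwz]
    · exact hstep z
  have hiter : ∀ (k : ℕ) (z : α), (f ^ k) z ∈ Y ↔ z ∈ Y := by
    intro k
    induction k with
    | zero => intro z; simp
    | succ k IH =>
      intro z
      rw [pow_succ, Equiv.Perm.mul_apply]
      exact (IH (f z)).trans (hiff z)
  obtain ⟨k, -, hky⟩ := hcon.exists_pow_eq'
  exact hxY ((hiter k x).mp (by rw [hfdef] at hky ⊢; rw [hky]; exact hyY))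

end PermAux

section Main

variable {α : Type*} [Fintype α] [DecidableEq α] {M : ℕ}

/-- indices of transpositions joining two points of the same cycle of `π`. -/
private def goodSet (s : Fin M → Perm α) (π : Perm α) : Finset (Fin M) :=
  Finset.univ.filter (fun k => ∃ x y : α, x ≠ y ∧ π.SameCycle x y ∧ s k = Equiv.swap x y)

private lemma mem_goodSet {s : Fin M → Perm α} {π : Perm α} {k : Fin M} :
    k ∈ goodSet s π ↔ ∃ x y : α, x ≠ y ∧ π.SameCycle x y ∧ s k = Equiv.swap x y := by
  unfold goodSet
  rw [Finset.mem_filter]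
  exact ⟨fun h => h.2, fun h => ⟨Finset.mem_univ _, h⟩⟩

private lemma main_induction (s : Fin M → Perm α)
    (hall : ∀ τ : Perm α, τ.IsSwap → ∃ k, s k = τ) :
    ∀ (N : ℕ) (π : Perm α), (goodSet s π).card ≤ N →
    ∃ ε : Fin M → Bool, (∀ k, ε k = true → k ∈ goodSet s π) ∧
      π = (List.ofFn fun k => if ε k then s k else 1).prod := by
  have trivialCase : ∀ π : Perm α, π = 1 →
      ∃ ε : Fin M → Bool, (∀ k, ε k = true → k ∈ goodSet s π) ∧
        π = (List.ofFn fun k => if ε k then s k else 1).prod := by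
    intro π hπ
    refine ⟨fun _ => false, by intro k h; simp at h, ?_⟩
    have h1 : (fun k : Fin M => if (false : Bool) then s k else 1) =
        fun _ : Fin M => (1 : Perm α) := by funext k; simp
    rw [h1, prod_ofFn_one, hπ]
  have neCase : ∀ π : Perm α, π ≠ 1 → (goodSet s π).Nonempty := by
    intro π hπ
    have : ∃ x : α, π x ≠ x := by
      by_contra h
      push_neg at h
      exact hπ (Equiv.ext h)
    obtain ⟨x, hx⟩ := this
    obtain ⟨k, hk⟩ := hall (Equiv.swap x (π x)) ⟨x, π x, Ne.symm hx, rfl⟩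
    exact ⟨k, mem_goodSet.mpr ⟨x, π x, Ne.symm hx,
      (Equiv.Perm.SameCycle.refl π x).apply_right, hk⟩⟩
  intro N
  induction N with
  | zero =>
    intro π hcard
    rcases eq_or_ne π 1 with hπ | hπ
    · exact trivialCase π hπ
    · exact absurd hcard (by
        have := Finset.card_pos.mpr (neCase π hπ); omega)
  | succ N IH =>
    intro π hcard
    rcases eq_or_ne π 1 with hπ | hπ
    · exact trivialCase π hπ
    have hne : (goodSet s π).Nonempty := neCase π hπ
    set e := (goodSet s π).max' hne with hedef
    have heE : e ∈ goodSet s π := (goodSet s π).max'_mem hne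
    obtain ⟨x, y, hxy, hsc, hse⟩ := mem_goodSet.mp heE
    set π' := π * Equiv.swap x y with hπ'def
    have hBsub : goodSet s π' ⊆ (goodSet s π).erase e := by
      intro k hk
      obtain ⟨u, v, huv, hscuv, hsk⟩ := mem_goodSet.mp hk
      refine Finset.mem_erase.mpr ⟨?_, mem_goodSet.mpr
        ⟨u, v, huv, sameCycle_of_mul_swap hsc hscuv, hsk⟩⟩
      rintro rfl
      have heq : Equiv.swap u v = Equiv.swap x y := by rw [← hsk, hse]
      have hu : v = Equiv.swap x y u := by rw [← heq, Equiv.swap_apply_left]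
      have hscxy : π'.SameCycle x y := by
        rcases eq_or_ne u x with rfl | hux
        · rw [Equiv.swap_apply_left] at hu
          subst hu
          exact hscuv
        · rcases eq_or_ne u y with rfl | huy
          · rw [Equiv.swap_apply_right] at hu
            subst hu
            exact hscuv.symm
          · rw [Equiv.swap_apply_of_ne_of_ne hux huy] at hu
            exact absurd hu.symm huv
      exact not_sameCycle_mul_swap hxy hsc hscxy
    have hcard' : (goodSet s π').card ≤ N := by
      have h1 := Finset.card_le_card hBsub
      have h2 : ((goodSet s π).erase e).card = (goodSet s π).card - 1 :=
        Finset.card_erase_of_mem heE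
      have h3 : 0 < (goodSet s π).card := Finset.card_pos.mpr hne
      omega
    obtain ⟨ε', hmem', hprod'⟩ := IH π' hcard'
    have hε'e : ε' e = false := by
      cases hh : ε' e
      · rfl
      · exact absurd rfl (Finset.mem_erase.mp (hBsub (hmem' e hh))).1
    refine ⟨fun k => if k = e then true else ε' k, ?_, ?_⟩
    · intro k hk
      by_cases hke : k = e
      · subst hke; exact heE
      · replace hk : (if k = e then true else ε' k) = true := hk
        rw [if_neg hke] at hk
        exact Finset.mem_of_mem_erase (hBsub (hmem' k hk))
    · have hg1 : ∀ k, e < k →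
          (if (if k = e then true else ε' k) then s k else 1) = 1 := by
        intro k hk
        rw [if_neg (ne_of_gt hk)]
        cases hh : ε' k
        · simp
        · exfalso
          have hkE : k ∈ goodSet s π :=
            Finset.mem_of_mem_erase (hBsub (hmem' k hh))
          exact absurd hk (not_lt.mpr ((goodSet s π).le_max' k hkE))
      have hge : (if (if e = e then true else ε' e) then s e else 1) = s e := by simp
      have hfun : (fun k => if k = e then (1 : Perm α)
          else if (if k = e then true else ε' k) then s k else 1)
          = fun k => if ε' k then s k else 1 := by
        funext k
        by_cases hke : k = e
        · subst hke
          rw [if_pos rfl, hε'e]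
          simp
        · rw [if_neg hke, if_neg hke]
      calc π = (List.ofFn fun k => if ε' k = true then s k else 1).prod * s e := by
              rw [← hprod', hse, hπ'def, mul_assoc, Equiv.swap_mul_self, mul_one]
        _ = (List.ofFn fun k => if k = e then (1 : Perm α)
              else if (if k = e then true else ε' k) = true then s k else 1).prod *
              (if (if e = e then true else ε' e) = true then s e else 1) := by
              rw [hfun, hge]
        _ = (List.ofFn fun k => if (if k = e then true else ε' k) = true then s k else 1).prod :=
              (prod_ofFn_eq_mul_last _ e hg1).symm

end Main

/-- Let `s_1, …, s_{C(n,2)}` be an enumeration of all transpositions of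
`S_n`, each occurring exactly once, in an arbitrary fixed order. Then every `π ∈ S_n`
is the product of some subsequence of `(s_1, …, s_{C(n,2)})` taken in order:
there are `ε_k ∈ {0,1}` with `π = s_1^{ε_1} ⋯ s_{C(n,2)}^{ε_{C(n,2)}}`. -/
theorem exists_subsequence_product_of_transposition_enumeration (n : ℕ) (hn : 2 ≤ n)
    (s : Fin (n.choose 2) → Equiv.Perm (Fin n))
    (hswap : ∀ k, (s k).IsSwap)
    (hinj : Function.Injective s)
    (hall : ∀ τ : Equiv.Perm (Fin n), τ.IsSwap → ∃ k, s k = τ)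
    (π : Equiv.Perm (Fin n)) :
    ∃ ε : Fin (n.choose 2) → Bool,
      π = (List.ofFn fun k => if ε k then s k else 1).prod := by
  obtain ⟨ε, -, hprod⟩ := main_induction s hall (goodSet s π).card π le_rfl
  exact ⟨ε, hprod⟩
end

section
/- Let s_1, …, s_m be transpositions in S_n, and suppose the greedy procedure starting from π (multiply on the left by s_k whenever doing so strictly decreases the Cayley length of the current product) terminates at a permutation π′ that is not the identity. Then there exist p ≠ q in the same cycle of π′ such that the transposition (p q) never occurs among s_1, …, s_m. Equivalently, if every transposition occurs in the sequence, the greedy procedure terminates at the identity. -/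
open Equiv Equiv.Perm

variable {α : Type*} [Fintype α] [LinearOrder α] [DecidableEq α]

/-- Induction principle along a cycle of `σ`. -/
theorem sameCycle_induct {σ : Perm α} {r : α → α → Prop}
    (htr : ∀ {x y z}, r x y → r y z → r x z)
    (hrefl : ∀ x, r x x)
    (hstep : ∀ z, r z (σ z)) {x y : α} (h : σ.SameCycle x y) : r x y := by
  obtain ⟨i, -, hi⟩ := h.exists_pow_eq'
  subst hi
  clear h
  induction i with
  | zero => simpa using hrefl x
  | succ k ih =>
      rw [pow_succ', Perm.mul_apply]
      exact htr ih (hstep _)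

theorem sameCycle_step (σ : Perm α) (x : α) : σ.SameCycle x (σ x) := ⟨1, by simp⟩

/-- If `a` and `b` are in the same cycle of `σ`, then `a` and `b` are in different
cycles of `swap a b * σ`. -/
theorem not_sameCycle_swap_mul {σ : Perm α} {a b : α} (hab : a ≠ b)
    (h : σ.SameCycle a b) : ¬ (swap a b * σ).SameCycle a b := by
  classical
  have hex : ∃ m, 0 < m ∧ (σ ^ m) a = b := by
    obtain ⟨i, -, hi⟩ := h.exists_pow_eq'
    rcases Nat.eq_zero_or_pos i with h0 | h0
    · exact absurd hi (by simp [h0, hab])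
    · exact ⟨i, h0, hi⟩
  set m := Nat.find hex with hm
  obtain ⟨hmpos, hmb⟩ : 0 < m ∧ (σ ^ m) a = b := Nat.find_spec hex
  have hne_a : ∀ j, 0 < j → j ≤ m → (σ ^ j) a ≠ a := by
    intro j hj hjm hja
    have : (σ ^ (m - j)) a = b := by
      have : (σ ^ (m - j)) ((σ ^ j) a) = b := by
        rw [← Perm.mul_apply, ← pow_add, Nat.sub_add_cancel hjm, hmb]
      rwa [hja] at this
    rcases Nat.eq_zero_or_pos (m - j) with h0 | h0
    · rw [h0] at this; exact hab (by simpa using this)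
    · exact Nat.find_min hex (by omega) ⟨h0, this⟩
  have hne_b : ∀ j, j < m → (σ ^ j) a ≠ b := by
    intro j hj hjb
    rcases Nat.eq_zero_or_pos j with h0 | h0
    · rw [h0] at hjb; exact hab (by simpa using hjb)
    · exact Nat.find_min hex hj ⟨h0, hjb⟩
  have key : ∀ k : ℕ, ∃ i, i < m ∧ ((swap a b * σ) ^ k) a = (σ ^ i) a := by
    intro k
    induction k with
    | zero => exact ⟨0, hmpos, rfl⟩
    | succ k ih =>
        obtain ⟨i, him, hik⟩ := ih
        rw [pow_succ', Perm.mul_apply, hik, Perm.mul_apply]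
        rcases Nat.lt_or_ge (i + 1) m with hlt | hge
        · refine ⟨i + 1, hlt, ?_⟩
          have hs1 : σ ((σ ^ i) a) = (σ ^ (i + 1)) a := by rw [pow_succ', Perm.mul_apply]
          rw [hs1]
          exact swap_apply_of_ne_of_ne (hne_a _ (Nat.succ_pos i) hlt.le) (hne_b _ hlt)
        · have : i + 1 = m := by omega
          refine ⟨0, hmpos, ?_⟩
          rw [show σ ((σ ^ i) a) = (σ ^ (i+1)) a by rw [pow_succ', Perm.mul_apply], this, hmb]
          simp
  intro hcon
  obtain ⟨k, -, hk⟩ := hcon.exists_pow_eq'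
  obtain ⟨i, him, hik⟩ := key k
  rw [hik] at hk
  exact hne_b i him hk

/-- If `a,b` are in different cycles of `σ`, then they are in the same cycle of
`swap a b * σ`. -/
theorem sameCycle_swap_mul_self {σ : Perm α} {a b : α} (hn : ¬σ.SameCycle a b) :
    (swap a b * σ).SameCycle a b := by
  classical
  have hex : ∃ m, 0 < m ∧ (σ ^ m) a = a :=
    ⟨orderOf σ, orderOf_pos σ, by rw [pow_orderOf_eq_one]; rfl⟩
  set m := Nat.find hex with hmdef
  obtain ⟨hmpos, hma⟩ : 0 < m ∧ (σ ^ m) a = a := Nat.find_spec hex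
  have hne_b : ∀ j : ℕ, (σ ^ j) a ≠ b := by
    intro j hj
    exact hn ⟨(j : ℤ), by rw [zpow_natCast]; exact hj⟩
  have hne_a : ∀ j, 0 < j → j < m → (σ ^ j) a ≠ a := by
    intro j hj hjm hja
    exact Nat.find_min hex hjm ⟨hj, hja⟩
  have key : ∀ j, j < m → ((swap a b * σ) ^ j) a = (σ ^ j) a := by
    intro j
    induction j with
    | zero => intro _; rfl
    | succ k ih =>
        intro hk
        rw [pow_succ', Perm.mul_apply, ih (by omega), Perm.mul_apply,
          show σ ((σ ^ k) a) = (σ ^ (k+1)) a by rw [pow_succ', Perm.mul_apply]]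
        exact swap_apply_of_ne_of_ne (hne_a _ (Nat.succ_pos k) hk) (hne_b _)
  have hfin : ((swap a b * σ) ^ m) a = b := by
    obtain ⟨k, hk⟩ : ∃ k, m = k + 1 := ⟨m - 1, by omega⟩
    rw [hk, pow_succ', Perm.mul_apply, key k (by omega), Perm.mul_apply,
      show σ ((σ ^ k) a) = (σ ^ (k+1)) a by rw [pow_succ', Perm.mul_apply], ← hk, hma]
    exact swap_apply_left a b
  exact ⟨(m : ℤ), by rw [zpow_natCast]; exact hfin⟩

/-- Multiplying by `swap a b` for `a, b` in different cycles only merges cycles: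
the same-cycle relation grows. -/
theorem sameCycle_mono_swap_mul {σ : Perm α} {a b : α} (hn : ¬σ.SameCycle a b)
    {x y : α} (h : σ.SameCycle x y) : (swap a b * σ).SameCycle x y := by
  refine sameCycle_induct (fun h1 h2 => h1.trans h2) (fun z => SameCycle.refl _ _) ?_ h
  intro z
  have hz : (swap a b * σ) z = swap a b (σ z) := rfl
  rcases eq_or_ne (σ z) a with ha | ha
  · have h1 : (swap a b * σ).SameCycle z b := ⟨1, by simp [hz, ha]⟩
    rw [ha]
    exact h1.trans (sameCycle_swap_mul_self hn).symm
  · rcases eq_or_ne (σ z) b with hb | hb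
    · have h1 : (swap a b * σ).SameCycle z a := ⟨1, by simp [hz, hb]⟩
      rw [hb]
      exact h1.trans (sameCycle_swap_mul_self hn)
    · exact ⟨1, by simp [hz, swap_apply_of_ne_of_ne ha hb]⟩

/-- Conversely, the cycles of `swap a b * σ` (for `a, b` in different `σ`-cycles)
are exactly the `σ`-cycles, with those of `a` and `b` merged. -/
theorem sameCycle_swap_mul_cases {σ : Perm α} {a b : α} (hn : ¬σ.SameCycle a b)
    {x y : α} (h : (swap a b * σ).SameCycle x y) :
    σ.SameCycle x y ∨ (σ.SameCycle x a ∧ σ.SameCycle b y) ∨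
      (σ.SameCycle x b ∧ σ.SameCycle a y) := by
  refine sameCycle_induct (σ := swap a b * σ)
    (r := fun x y => σ.SameCycle x y ∨ (σ.SameCycle x a ∧ σ.SameCycle b y) ∨
      (σ.SameCycle x b ∧ σ.SameCycle a y)) ?_ (fun z => Or.inl (SameCycle.refl _ _)) ?_ h
  · rintro x y z (h1 | ⟨h1, h2⟩ | ⟨h1, h2⟩) (h3 | ⟨h3, h4⟩ | ⟨h3, h4⟩)
    · exact Or.inl (h1.trans h3)
    · exact Or.inr (Or.inl ⟨h1.trans h3, h4⟩)
    · exact Or.inr (Or.inr ⟨h1.trans h3, h4⟩)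
    · exact Or.inr (Or.inl ⟨h1, h2.trans h3⟩)
    · exact absurd (h2.trans h3).symm hn
    · exact Or.inl (h1.trans h4)
    · exact Or.inr (Or.inr ⟨h1, h2.trans h3⟩)
    · exact Or.inl (h1.trans h4)
    · exact absurd (h2.trans h3) hn
  · intro z
    have hz : (swap a b * σ) z = swap a b (σ z) := rfl
    rcases eq_or_ne (σ z) a with ha | ha
    · rw [hz, ha, swap_apply_left]
      exact Or.inr (Or.inl ⟨⟨1, by simpa using ha⟩, SameCycle.refl _ _⟩)
    · rcases eq_or_ne (σ z) b with hb | hb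
      · rw [hz, hb, swap_apply_right]
        exact Or.inr (Or.inr ⟨⟨1, by simpa using hb⟩, SameCycle.refl _ _⟩)
      · rw [hz, swap_apply_of_ne_of_ne ha hb]
        exact Or.inl ⟨1, by simp⟩

/-- The number of cycles (orbits, including fixed points) of a permutation,
counted via the minimal element of each cycle. -/
def ncyc (σ : Perm α) : ℕ :=
  (Finset.univ.filter fun x => ∀ y, σ.SameCycle x y → x ≤ y).card

theorem ncyc_one : ncyc (1 : Perm α) = Fintype.card α := by
  rw [ncyc, Finset.filter_true_of_mem, Finset.card_univ]
  intro x _ y hy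
  rw [sameCycle_one] at hy
  exact hy.le

theorem ncyc_le (σ : Perm α) : ncyc σ ≤ Fintype.card α := by
  rw [← Finset.card_univ]
  exact Finset.card_filter_le _ _

theorem ncyc_lt_of_ne_one {σ : Perm α} (h : σ ≠ 1) : ncyc σ < Fintype.card α := by
  obtain ⟨x, hx⟩ : ∃ x, σ x ≠ x := by
    by_contra hc
    push_neg at hc
    exact h (Equiv.ext hc)
  set z := max x (σ x) with hz
  have hsub : (Finset.univ.filter fun w => ∀ y, σ.SameCycle w y → w ≤ y)
      ⊆ Finset.univ.erase z := by
    intro w hw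
    rw [Finset.mem_filter] at hw
    rw [Finset.mem_erase]
    refine ⟨?_, Finset.mem_univ _⟩
    rintro rfl
    rcases lt_or_gt_of_ne (Ne.symm hx) with hlt | hlt
    · have hzz : z = σ x := max_eq_right hlt.le
      have := hw.2 x (by rw [hzz]; exact (sameCycle_step σ x).symm)
      rw [hzz] at this
      exact absurd this (not_le.2 hlt)
    · have hzz : z = x := max_eq_left hlt.le
      have := hw.2 (σ x) (by rw [hzz]; exact sameCycle_step σ x)
      rw [hzz] at this
      exact absurd this (not_le.2 hlt)
  have hcard := Finset.card_le_card hsub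
  rw [Finset.card_erase_of_mem (Finset.mem_univ z), Finset.card_univ] at hcard
  have hpos : 0 < Fintype.card α := Fintype.card_pos_iff.2 ⟨x⟩
  rw [ncyc]
  omega

/-- Characterization of being the minimum of the merged cycle. -/
theorem pred_merged {σ : Perm α} {a b A B : α} (_hab : a ≠ b) (hn : ¬σ.SameCycle a b)
    (hAa : σ.SameCycle a A) (hAmin : ∀ y, σ.SameCycle a y → A ≤ y)
    (hBb : σ.SameCycle b B) (hBmin : ∀ y, σ.SameCycle b y → B ≤ y)
    {x : α} (hxa : σ.SameCycle x a) :
    (∀ y, (swap a b * σ).SameCycle x y → x ≤ y) ↔ (x = A ∧ x ≤ B) := by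
  constructor
  · intro h
    have hxA : x = A := by
      refine le_antisymm (h A (sameCycle_mono_swap_mul hn (hxa.trans hAa))) (hAmin x hxa.symm)
    refine ⟨hxA, ?_⟩
    exact h B (((sameCycle_mono_swap_mul hn hxa).trans (sameCycle_swap_mul_self hn)).trans
      (sameCycle_mono_swap_mul hn hBb))
  · rintro ⟨rfl, hAB⟩
    intro y hy
    rcases sameCycle_swap_mul_cases hn hy with h1 | ⟨h1, h2⟩ | ⟨h1, h2⟩
    · exact hAmin y (hxa.symm.trans h1)
    · exact hAB.trans (hBmin y h2)
    · exact absurd (hxa.symm.trans h1) hn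

/-- Merging two cycles decreases the cycle count by one. -/
theorem ncyc_swap_mul_of_not_sameCycle {σ : Perm α} {a b : α} (hab : a ≠ b)
    (hn : ¬σ.SameCycle a b) : ncyc (swap a b * σ) + 1 = ncyc σ := by
  have hCa : (Finset.univ.filter (σ.SameCycle a)).Nonempty :=
    ⟨a, by simp [SameCycle.refl]⟩
  have hCb : (Finset.univ.filter (σ.SameCycle b)).Nonempty :=
    ⟨b, by simp [SameCycle.refl]⟩
  set A := (Finset.univ.filter (σ.SameCycle a)).min' hCa with hA
  set B := (Finset.univ.filter (σ.SameCycle b)).min' hCb with hB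
  have hAa : σ.SameCycle a A := by
    have := Finset.min'_mem _ hCa; rw [Finset.mem_filter] at this; exact this.2
  have hAmin : ∀ y, σ.SameCycle a y → A ≤ y := fun y hy =>
    Finset.min'_le _ _ (Finset.mem_filter.2 ⟨Finset.mem_univ _, hy⟩)
  have hBb : σ.SameCycle b B := by
    have := Finset.min'_mem _ hCb; rw [Finset.mem_filter] at this; exact this.2
  have hBmin : ∀ y, σ.SameCycle b y → B ≤ y := fun y hy =>
    Finset.min'_le _ _ (Finset.mem_filter.2 ⟨Finset.mem_univ _, hy⟩)
  have hABne : A ≠ B := fun h => hn (hAa.trans (h ▸ hBb.symm))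
  have hnba : ¬σ.SameCycle b a := fun h => hn h.symm
  have hset : (Finset.univ.filter fun x => ∀ y, (swap a b * σ).SameCycle x y → x ≤ y)
      = (Finset.univ.filter fun x => ∀ y, σ.SameCycle x y → x ≤ y).erase (max A B) := by
    ext x
    simp only [Finset.mem_filter, Finset.mem_erase, Finset.mem_univ, true_and]
    by_cases hxa : σ.SameCycle x a
    · rw [pred_merged hab hn hAa hAmin hBb hBmin hxa]
      constructor
      · rintro ⟨hxA, hAB⟩
        rw [hxA] at hAB ⊢
        refine ⟨by rw [max_eq_right hAB]; exact hABne, ?_⟩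
        intro y hy
        exact hAmin y (hAa.trans hy)
      · rintro ⟨hne, hmin⟩
        have hxA : x = A := le_antisymm (hmin A (hxa.trans hAa)) (hAmin x hxa.symm)
        rw [hxA] at hne ⊢
        refine ⟨rfl, ?_⟩
        rcases max_choice A B with h' | h'
        · exact absurd h'.symm hne
        · calc A ≤ max A B := le_max_left A B
            _ = B := h'
    · by_cases hxb : σ.SameCycle x b
      · rw [show swap a b * σ = swap b a * σ by rw [swap_comm],
          pred_merged hab.symm hnba hBb hBmin hAa hAmin hxb]
        constructor
        · rintro ⟨hxB, hBA⟩
          rw [hxB] at hBA ⊢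
          refine ⟨by rw [max_comm, max_eq_right hBA]; exact fun h => hABne h.symm, ?_⟩
          intro y hy
          exact hBmin y (hBb.trans hy)
        · rintro ⟨hne, hmin⟩
          have hxB : x = B := le_antisymm (hmin B (hxb.trans hBb)) (hBmin x hxb.symm)
          rw [hxB] at hne ⊢
          refine ⟨rfl, ?_⟩
          rcases max_choice A B with h' | h'
          · calc B ≤ max A B := le_max_right A B
              _ = A := h'
          · exact absurd h'.symm hne
      · have hiff : ∀ y, ((swap a b * σ).SameCycle x y ↔ σ.SameCycle x y) := by
          intro y
          constructor
          · intro hy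
            rcases sameCycle_swap_mul_cases hn hy with h1 | ⟨h1, _⟩ | ⟨h1, _⟩
            · exact h1
            · exact absurd h1 hxa
            · exact absurd h1 hxb
          · exact sameCycle_mono_swap_mul hn
        constructor
        · intro h
          refine ⟨?_, fun y hy => h y ((hiff y).2 hy)⟩
          have hxA : x ≠ A := fun h' => hxa (h' ▸ hAa.symm)
          have hxB : x ≠ B := fun h' => hxb (h' ▸ hBb.symm)
          rcases max_choice A B with h' | h' <;> rw [h'] <;> assumption
        · rintro ⟨_, h⟩ y hy
          exact h y ((hiff y).1 hy)
  have hMem : max A B ∈ (Finset.univ.filter fun x => ∀ y, σ.SameCycle x y → x ≤ y) := by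
    rcases max_choice A B with h' | h' <;> rw [h']
    · exact Finset.mem_filter.2 ⟨Finset.mem_univ _, fun y hy => hAmin y (hAa.trans hy)⟩
    · exact Finset.mem_filter.2 ⟨Finset.mem_univ _, fun y hy => hBmin y (hBb.trans hy)⟩
  have hpos : 0 < (Finset.univ.filter fun x => ∀ y, σ.SameCycle x y → x ≤ y).card :=
    Finset.card_pos.2 ⟨_, hMem⟩
  rw [ncyc, ncyc, hset, Finset.card_erase_of_mem hMem]
  omega

/-- Splitting a cycle increases the cycle count by one. -/
theorem ncyc_swap_mul_of_sameCycle {σ : Perm α} {a b : α} (hab : a ≠ b)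
    (hsc : σ.SameCycle a b) : ncyc σ + 1 = ncyc (swap a b * σ) := by
  have hP2 := not_sameCycle_swap_mul hab hsc
  have hσ : swap a b * (swap a b * σ) = σ := swap_mul_self_mul a b σ
  have := ncyc_swap_mul_of_not_sameCycle hab hP2
  rwa [hσ] at this

/-- When the swap splits a cycle, the same-cycle relation only shrinks. -/
theorem sameCycle_anti_swap_mul {σ : Perm α} {a b : α} (hab : a ≠ b)
    (hsc : σ.SameCycle a b) {x y : α} (h : (swap a b * σ).SameCycle x y) :
    σ.SameCycle x y := by
  have hP2 := not_sameCycle_swap_mul hab hsc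
  have hσ : swap a b * (swap a b * σ) = σ := swap_mul_self_mul a b σ
  have := sameCycle_mono_swap_mul hP2 h
  rwa [hσ] at this

/-- Lower bound: any factorization into transpositions has length at least
`card α - ncyc`. -/
theorem card_le_length_add_ncyc :
    ∀ l : List (Perm α), (∀ t ∈ l, t.IsSwap) →
      Fintype.card α ≤ l.length + ncyc l.prod := by
  intro l
  induction l with
  | nil => intro _; simp [ncyc_one]
  | cons t l ih =>
      intro hl
      obtain ⟨a, b, hab, rfl⟩ := hl t List.mem_cons_self
      have hrec := ih (fun u hu => hl u (List.mem_cons_of_mem _ hu))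
      rw [List.prod_cons, List.length_cons]
      by_cases hsc : (l.prod).SameCycle a b
      · have := ncyc_swap_mul_of_sameCycle hab hsc
        omega
      · have := ncyc_swap_mul_of_not_sameCycle hab hsc
        omega

/-- Upper bound: a factorization into `card α - ncyc σ` transpositions exists. -/
theorem exists_factorization (σ : Perm α) :
    ∃ l : List (Perm α), (∀ t ∈ l, t.IsSwap) ∧ l.prod = σ ∧
      l.length + ncyc σ = Fintype.card α := by
  generalize hk : Fintype.card α - ncyc σ = k
  induction k generalizing σ with
  | zero =>
      have h1 : σ = 1 := by
        by_contra h
        have := ncyc_lt_of_ne_one h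
        omega
      subst h1
      exact ⟨[], by simp, by simp, by simp [ncyc_one]⟩
  | succ k ih =>
      have hne : σ ≠ 1 := by
        intro h
        rw [h, ncyc_one] at hk
        omega
      obtain ⟨x, hx⟩ : ∃ x, σ x ≠ x := by
        by_contra hc
        push_neg at hc
        exact hne (Equiv.ext hc)
      have hab : x ≠ σ x := Ne.symm hx
      have hsc : σ.SameCycle x (σ x) := sameCycle_step σ x
      have hsplit := ncyc_swap_mul_of_sameCycle hab hsc
      have hlt := ncyc_lt_of_ne_one hne
      obtain ⟨l, hl1, hl2, hl3⟩ := ih (swap x (σ x) * σ) (by omega)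
      refine ⟨swap x (σ x) :: l, ?_, ?_, ?_⟩
      · intro u hu
        rcases List.mem_cons.1 hu with rfl | hu
        · exact ⟨x, σ x, hab, rfl⟩
        · exact hl1 u hu
      · rw [List.prod_cons, hl2, swap_mul_self_mul]
      · rw [List.length_cons]
        omega

/-- The Cayley length of a permutation: the minimal number of transpositions whose
(ordered) product is `π`. -/
noncomputable def cayleyLength {n : ℕ} (π : Equiv.Perm (Fin n)) : ℕ :=
  sInf {k | ∃ l : List (Equiv.Perm (Fin n)),
    l.length = k ∧ (∀ s ∈ l, s.IsSwap) ∧ l.prod = π}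

/-- The greedy procedure: run through the list `s` in order, multiplying the current
permutation on the left by `s_k` exactly when doing so strictly decreases the Cayley
length. -/
noncomputable def greedy {n : ℕ} (π : Equiv.Perm (Fin n))
    (s : List (Equiv.Perm (Fin n))) : Equiv.Perm (Fin n) :=
  s.foldl (fun σ t => if cayleyLength (t * σ) < cayleyLength σ then t * σ else σ) π

theorem cayleyLength_add_ncyc {n : ℕ} (σ : Perm (Fin n)) :
    cayleyLength σ + ncyc σ = n := by
  obtain ⟨l, hl1, hl2, hl3⟩ := exists_factorization σ
  have h1 : l.length ∈ {k | ∃ l : List (Perm (Fin n)),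
      l.length = k ∧ (∀ s ∈ l, s.IsSwap) ∧ l.prod = σ} := ⟨l, rfl, hl1, hl2⟩
  have h2 : cayleyLength σ ≤ l.length := Nat.sInf_le h1
  obtain ⟨l', hl'1, hl'2, hl'3⟩ := Nat.sInf_mem (⟨_, h1⟩ :
    Set.Nonempty {k | ∃ l : List (Perm (Fin n)),
      l.length = k ∧ (∀ s ∈ l, s.IsSwap) ∧ l.prod = σ})
  have h3 : Fintype.card (Fin n) ≤ l'.length + ncyc σ := by
    rw [← hl'3]
    exact card_le_length_add_ncyc l' hl'2
  rw [Fintype.card_fin] at hl3 h3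
  rw [hl'1] at h3
  have : cayleyLength σ = sInf _ := rfl
  omega

theorem cayleyLength_lt_iff {n : ℕ} {σ : Perm (Fin n)} {a b : Fin n} (hab : a ≠ b) :
    cayleyLength (swap a b * σ) < cayleyLength σ ↔ σ.SameCycle a b := by
  have h1 := cayleyLength_add_ncyc σ
  have h2 := cayleyLength_add_ncyc (swap a b * σ)
  constructor
  · intro h
    by_contra hn
    have := ncyc_swap_mul_of_not_sameCycle hab hn
    omega
  · intro hsc
    have := ncyc_swap_mul_of_sameCycle hab hsc
    omega

/-- The same-cycle relation only shrinks along the greedy procedure. -/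
theorem greedy_sameCycle_mono {n : ℕ} :
    ∀ (s : List (Perm (Fin n))), (∀ t ∈ s, t.IsSwap) → ∀ (σ : Perm (Fin n)) (p q : Fin n),
      (greedy σ s).SameCycle p q → σ.SameCycle p q := by
  intro s
  induction s with
  | nil => intro _ σ p q h; exact h
  | cons t s ih =>
      intro hs σ p q h
      rw [greedy, List.foldl_cons] at h
      have h' := ih (fun u hu => hs u (List.mem_cons_of_mem _ hu)) _ p q h
      by_cases hc : cayleyLength (t * σ) < cayleyLength σ
      · rw [if_pos hc] at h'
        obtain ⟨a, b, hab, rfl⟩ := hs t List.mem_cons_self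
        exact sameCycle_anti_swap_mul hab ((cayleyLength_lt_iff hab).1 hc) h'
      · rwa [if_neg hc] at h'

/-- If `swap p q` occurs in the list, then `p` and `q` are in different cycles at
the end of the greedy procedure. -/
theorem greedy_not_sameCycle {n : ℕ} :
    ∀ (s : List (Perm (Fin n))), (∀ t ∈ s, t.IsSwap) → ∀ (σ : Perm (Fin n)) (p q : Fin n),
      p ≠ q → swap p q ∈ s → ¬(greedy σ s).SameCycle p q := by
  intro s
  induction s with
  | nil => intro _ σ p q _ h; exact absurd h List.not_mem_nil
  | cons t s ih =>
      intro hs σ p q hpq hmem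
      rcases List.mem_cons.1 hmem with heq | hmem'
      · subst heq
        set σ' := if cayleyLength (swap p q * σ) < cayleyLength σ then swap p q * σ else σ
          with hσ'
        have hns : ¬σ'.SameCycle p q := by
          by_cases hc : cayleyLength (swap p q * σ) < cayleyLength σ
          · rw [hσ', if_pos hc]
            exact not_sameCycle_swap_mul hpq ((cayleyLength_lt_iff hpq).1 hc)
          · rw [hσ', if_neg hc]
            intro hsc
            exact hc ((cayleyLength_lt_iff hpq).2 hsc)
        intro h
        rw [greedy, List.foldl_cons] at h
        exact hns (greedy_sameCycle_mono s (fun u hu => hs u (List.mem_cons_of_mem _ hu))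
          σ' p q h)
      · intro h
        rw [greedy, List.foldl_cons] at h
        exact ih (fun u hu => hs u (List.mem_cons_of_mem _ hu)) _ p q hpq hmem' h

/-- If the greedy procedure along a sequence of transpositions
`s_1, …, s_m`, started from `π`, terminates at `π′ ≠ 1`, then there are `p ≠ q` in the
same cycle of `π′` such that the transposition `(p q)` never occurs in the sequence.
Equivalently, if every transposition occurs in the sequence, the greedy procedure
terminates at the identity. -/
theorem greedy_terminates_at_one (n : ℕ) (π : Equiv.Perm (Fin n))
    (s : List (Equiv.Perm (Fin n))) (hs : ∀ t ∈ s, t.IsSwap) :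
    (greedy π s ≠ 1 →
      ∃ p q : Fin n, p ≠ q ∧ (greedy π s).SameCycle p q ∧ Equiv.swap p q ∉ s) ∧
    ((∀ τ : Equiv.Perm (Fin n), τ.IsSwap → τ ∈ s) → greedy π s = 1) := by
  have part1 : greedy π s ≠ 1 →
      ∃ p q : Fin n, p ≠ q ∧ (greedy π s).SameCycle p q ∧ Equiv.swap p q ∉ s := by
    intro h1
    obtain ⟨x, hx⟩ : ∃ x, greedy π s x ≠ x := by
      by_contra hc
      push_neg at hc
      exact h1 (Equiv.ext hc)
    refine ⟨x, greedy π s x, Ne.symm hx, sameCycle_step _ x, ?_⟩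
    intro hmem
    exact greedy_not_sameCycle s hs π x (greedy π s x) (Ne.symm hx) hmem
      (sameCycle_step _ x)
  refine ⟨part1, ?_⟩
  intro hall
  by_contra h1
  obtain ⟨p, q, hpq, _, hns⟩ := part1 h1
  exact hns (hall _ ⟨p, q, hpq, rfl⟩)
end

section
/- Let T be a mutation time for an irreducible Markov chain on S_n with uniform stationary distribution, and suppose P(T > t) < ε. Then after t steps the separation distance from the uniform distribution is at most ε: for every starting state x_0 and every permutation π′, the probability that the chain started at x_0 is at π′ at time t is at least (1 − ε)/n!. -/
open Finset

/-- The probability of a length-`t` path `p` under a transition kernel `P`. -/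
noncomputable def pathProb {n : ℕ} (t : ℕ)
    (P : Equiv.Perm (Fin n) → Equiv.Perm (Fin n) → ℝ)
    (p : Fin (t + 1) → Equiv.Perm (Fin n)) : ℝ :=
  ∏ i : Fin t, P (p i.castSucc) (p i.succ)

/-- The `k`-step transition kernel. -/
noncomputable def kernelIter {n : ℕ}
    (P : Equiv.Perm (Fin n) → Equiv.Perm (Fin n) → ℝ) :
    ℕ → Equiv.Perm (Fin n) → Equiv.Perm (Fin n) → ℝ
  | 0 => fun x y => if x = y then 1 else 0
  | (k + 1) => fun x y => ∑ z, kernelIter P k x z * P z y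

lemma pathProb_nonneg {n : ℕ} (t : ℕ)
    (P : Equiv.Perm (Fin n) → Equiv.Perm (Fin n) → ℝ)
    (hP0 : ∀ x y, 0 ≤ P x y) (p : Fin (t + 1) → Equiv.Perm (Fin n)) :
    0 ≤ pathProb t P p :=
  Finset.prod_nonneg fun _ _ => hP0 _ _

lemma pathProb_cons {n : ℕ} (t : ℕ)
    (P : Equiv.Perm (Fin n) → Equiv.Perm (Fin n) → ℝ)
    (y : Equiv.Perm (Fin n)) (q : Fin (t + 1) → Equiv.Perm (Fin n)) :
    pathProb (t + 1) P (Fin.cons y q) = P y (q 0) * pathProb t P q := by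
  unfold pathProb
  rw [Fin.prod_univ_succ]
  simp only [Fin.castSucc_zero, Fin.cons_zero, Fin.cons_succ, ← Fin.succ_castSucc]

lemma total_paths {n : ℕ}
    (P : Equiv.Perm (Fin n) → Equiv.Perm (Fin n) → ℝ)
    (hrow : ∀ x, ∑ y, P x y = 1) :
    ∀ (t : ℕ) (x0 : Equiv.Perm (Fin n)),
      ∑ p ∈ univ.filter (fun p : Fin (t + 1) → Equiv.Perm (Fin n) => p 0 = x0),
        pathProb t P p = 1 := by
  intro t
  induction t with
  | zero =>
    intro x0
    have h : (univ.filter (fun p : Fin 1 → Equiv.Perm (Fin n) => p 0 = x0))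
        = {fun _ => x0} := by
      ext p
      simp only [mem_filter, mem_univ, true_and, mem_singleton]
      constructor
      · intro h; funext i; rw [Subsingleton.elim i 0, h]
      · intro h; rw [h]
    rw [h, Finset.sum_singleton]
    simp [pathProb]
  | succ t ih =>
    intro x0
    rw [Finset.sum_filter]
    rw [← Equiv.sum_comp (Fin.consEquiv (fun _ : Fin (t + 2) => Equiv.Perm (Fin n)))]
    rw [Fintype.sum_prod_type]
    have hstep : ∀ y : Equiv.Perm (Fin n),
        (∑ q : Fin (t + 1) → Equiv.Perm (Fin n),
          if (Fin.consEquiv (fun _ : Fin (t + 2) => Equiv.Perm (Fin n)) (y, q)) 0 = x0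
          then pathProb (t + 1) P
            (Fin.consEquiv (fun _ : Fin (t + 2) => Equiv.Perm (Fin n)) (y, q)) else 0)
        = if y = x0 then 1 else 0 := by
      intro y
      have hcons : ∀ q : Fin (t + 1) → Equiv.Perm (Fin n),
          (Fin.consEquiv (fun _ : Fin (t + 2) => Equiv.Perm (Fin n)) (y, q))
          = Fin.cons y q := fun q => rfl
      by_cases hy : y = x0
      · rw [if_pos hy]
        have heach : ∀ q : Fin (t + 1) → Equiv.Perm (Fin n),
            (if (Fin.consEquiv (fun _ : Fin (t + 2) => Equiv.Perm (Fin n)) (y, q)) 0 = x0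
            then pathProb (t + 1) P
              (Fin.consEquiv (fun _ : Fin (t + 2) => Equiv.Perm (Fin n)) (y, q)) else 0)
            = P y (q 0) * pathProb t P q := by
          intro q
          rw [hcons q]
          rw [if_pos (by rw [Fin.cons_zero]; exact hy)]
          exact pathProb_cons t P y q
        rw [Finset.sum_congr rfl (fun q _ => heach q)]
        rw [← Finset.sum_fiberwise univ (fun q : Fin (t + 1) → Equiv.Perm (Fin n) => q 0)
          (fun q => P y (q 0) * pathProb t P q)]
        have hfib : ∀ z : Equiv.Perm (Fin n),
            ∑ q ∈ univ.filter (fun q : Fin (t + 1) → Equiv.Perm (Fin n) => q 0 = z),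
              P y (q 0) * pathProb t P q = P y z := by
          intro z
          have heq : ∀ q ∈ univ.filter (fun q : Fin (t + 1) → Equiv.Perm (Fin n) => q 0 = z),
              P y (q 0) * pathProb t P q = P y z * pathProb t P q := by
            intro q hq
            rw [mem_filter] at hq
            rw [hq.2]
          rw [Finset.sum_congr rfl heq, ← Finset.mul_sum, ih z, mul_one]
        rw [Finset.sum_congr rfl (fun z _ => hfib z)]
        exact hrow y
      · rw [if_neg hy]
        apply Finset.sum_eq_zero
        intro q _
        rw [hcons q]
        rw [if_neg (by rw [Fin.cons_zero]; exact hy)]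
    rw [Finset.sum_congr rfl (fun y _ => hstep y)]
    simp

set_option maxHeartbeats 1000000 in
/-- Let `T` be a mutation time for an irreducible Markov chain on `S_n`
with uniform stationary distribution (doubly stochastic kernel `P`), and suppose
`P(T > t) < ε`. Then after `t` steps the separation distance from uniform is at most
`ε`: for every start `x0` and every permutation `π′`, the probability that the chain
is at `π′` at time `t` is at least `(1 − ε)/n!`.

A path of length `t` from `x0` is `p : Fin (t+1) → S_n` with `p 0 = x0`; its
probability is the product of the transition probabilities. `Sat p` expresses that
the stopping time `T` is satisfied by time `t` along `p`; the mutation-time property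
is the hypothesis `hmut`: probability-preserving injections from satisfying paths
ending at `π` into paths ending at `π′`. -/
theorem mutation_time_separation_bound (n t : ℕ)
    (P : Equiv.Perm (Fin n) → Equiv.Perm (Fin n) → ℝ)
    (hP0 : ∀ x y, 0 ≤ P x y)
    (hrow : ∀ x, ∑ y, P x y = 1)
    (hstat : ∀ y, ∑ x, P x y = 1)
    (hirr : ∀ x y, ∃ k, 0 < kernelIter P k x y)
    (x0 : Equiv.Perm (Fin n)) (ε : ℝ)
    (Sat : (Fin (t + 1) → Equiv.Perm (Fin n)) → Prop) [DecidablePred Sat]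
    (hmut : ∀ π π' : Equiv.Perm (Fin n),
      ∃ f : {p : Fin (t + 1) → Equiv.Perm (Fin n) //
                p 0 = x0 ∧ Sat p ∧ p (Fin.last t) = π} →
            {p : Fin (t + 1) → Equiv.Perm (Fin n) //
                p 0 = x0 ∧ p (Fin.last t) = π'},
        Function.Injective f ∧ ∀ p, pathProb t P (f p).1 = pathProb t P p.1)
    (hT : ∑ p ∈ univ.filter
        (fun p : Fin (t + 1) → Equiv.Perm (Fin n) => p 0 = x0 ∧ ¬ Sat p),
        pathProb t P p < ε) :
    ∀ π' : Equiv.Perm (Fin n),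
      (1 - ε) / (Nat.factorial n : ℝ) ≤
        ∑ p ∈ univ.filter
          (fun p : Fin (t + 1) → Equiv.Perm (Fin n) =>
            p 0 = x0 ∧ p (Fin.last t) = π'),
          pathProb t P p := by
  intro π'
  -- good + bad = 1
  have hsplit : (∑ p ∈ univ.filter
        (fun p : Fin (t + 1) → Equiv.Perm (Fin n) => p 0 = x0 ∧ Sat p), pathProb t P p)
      + (∑ p ∈ univ.filter
        (fun p : Fin (t + 1) → Equiv.Perm (Fin n) => p 0 = x0 ∧ ¬ Sat p),
        pathProb t P p) = 1 := by
    have h := Finset.sum_filter_add_sum_filter_not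
      (univ.filter (fun p : Fin (t + 1) → Equiv.Perm (Fin n) => p 0 = x0)) Sat
      (pathProb t P)
    rw [Finset.filter_filter, Finset.filter_filter] at h
    rw [h]
    exact total_paths P hrow t x0
  have hgood : 1 - ε < ∑ p ∈ univ.filter
      (fun p : Fin (t + 1) → Equiv.Perm (Fin n) => p 0 = x0 ∧ Sat p),
      pathProb t P p := by linarith
  -- good = ∑ π, Q π
  have hfib : (∑ π : Equiv.Perm (Fin n), ∑ p ∈ univ.filter
        (fun p : Fin (t + 1) → Equiv.Perm (Fin n) =>
          p 0 = x0 ∧ Sat p ∧ p (Fin.last t) = π), pathProb t P p)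
      = ∑ p ∈ univ.filter
        (fun p : Fin (t + 1) → Equiv.Perm (Fin n) => p 0 = x0 ∧ Sat p),
        pathProb t P p := by
    rw [← Finset.sum_fiberwise
      (univ.filter (fun p : Fin (t + 1) → Equiv.Perm (Fin n) => p 0 = x0 ∧ Sat p))
      (fun p => p (Fin.last t)) (pathProb t P)]
    apply Finset.sum_congr rfl
    intro π _
    simp only [Finset.filter_filter]
    apply Finset.sum_congr _ (fun _ _ => rfl)
    apply Finset.filter_congr
    intro p _
    tauto
  -- Q π ≤ R for every π
  have hQR : ∀ π : Equiv.Perm (Fin n),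
      (∑ p ∈ univ.filter
        (fun p : Fin (t + 1) → Equiv.Perm (Fin n) =>
          p 0 = x0 ∧ Sat p ∧ p (Fin.last t) = π), pathProb t P p)
      ≤ ∑ p ∈ univ.filter
        (fun p : Fin (t + 1) → Equiv.Perm (Fin n) =>
          p 0 = x0 ∧ p (Fin.last t) = π'), pathProb t P p := by
    intro π
    obtain ⟨f, hf_inj, hf_prob⟩ := hmut π π'
    rw [Finset.sum_subtype
      (p := fun p : Fin (t + 1) → Equiv.Perm (Fin n) =>
        p 0 = x0 ∧ Sat p ∧ p (Fin.last t) = π)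
      (univ.filter (fun p : Fin (t + 1) → Equiv.Perm (Fin n) =>
        p 0 = x0 ∧ Sat p ∧ p (Fin.last t) = π)) (fun x => by simp) (pathProb t P)]
    rw [Finset.sum_subtype
      (p := fun p : Fin (t + 1) → Equiv.Perm (Fin n) =>
        p 0 = x0 ∧ p (Fin.last t) = π')
      (univ.filter (fun p : Fin (t + 1) → Equiv.Perm (Fin n) =>
        p 0 = x0 ∧ p (Fin.last t) = π')) (fun x => by simp) (pathProb t P)]
    calc ∑ a : {p : Fin (t + 1) → Equiv.Perm (Fin n) //
            p 0 = x0 ∧ Sat p ∧ p (Fin.last t) = π}, pathProb t P a.1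
        = ∑ a : {p : Fin (t + 1) → Equiv.Perm (Fin n) //
            p 0 = x0 ∧ Sat p ∧ p (Fin.last t) = π}, pathProb t P (f a).1 :=
          Finset.sum_congr rfl (fun a _ => (hf_prob a).symm)
      _ = ∑ b ∈ univ.image f, pathProb t P b.1 := by
          rw [Finset.sum_image (fun x _ y _ h => hf_inj h)]
      _ ≤ ∑ b : {p : Fin (t + 1) → Equiv.Perm (Fin n) //
            p 0 = x0 ∧ p (Fin.last t) = π'}, pathProb t P b.1 :=
          Finset.sum_le_sum_of_subset_of_nonneg (Finset.subset_univ _)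
            (fun b _ _ => pathProb_nonneg t P hP0 b.1)
  -- sum over π
  have hcard : (Fintype.card (Equiv.Perm (Fin n)) : ℝ) = (Nat.factorial n : ℝ) := by
    rw [Fintype.card_perm, Fintype.card_fin]
  have hsum : 1 - ε < (Nat.factorial n : ℝ) * ∑ p ∈ univ.filter
      (fun p : Fin (t + 1) → Equiv.Perm (Fin n) =>
        p 0 = x0 ∧ p (Fin.last t) = π'), pathProb t P p := by
    have h1 := Finset.sum_le_sum (fun π _ => hQR π) (s := (univ : Finset (Equiv.Perm (Fin n))))
    rw [hfib, Finset.sum_const, Finset.card_univ, nsmul_eq_mul, hcard] at h1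
    linarith
  have hfac : (0 : ℝ) < (Nat.factorial n : ℝ) := by
    exact_mod_cast Nat.factorial_pos n
  rw [div_le_iff₀ hfac]
  linarith [hsum]
end
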